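/- Let X be a real n×k matrix with XᵀX invertible such that the all-ones vector ι lies in the column space of X, let Z be a real n-vector with Z^{⊥X} := (I − P_X)Z ≠ 0, let W = [X Z] and W' = [X Z^{⊥X}], and let Y be a real n-vector with Yᵀ M⁰ Y ≠ 0 and R²_{Y∼X} < 1. Then the partial R² of Y and Z given X equals the partial R² of Y and Z^{⊥X} given X: (R²_{Y∼X+Z} − R²_{Y∼X})/(1 − R²_{Y∼X}) = (R²_{Y∼X+Z^{⊥X}} − R²_{Y∼X})/(1 − R²_{Y∼X}), i.e., R²_{Y∼X+Z} = R²_{Y∼X+Z^{⊥X}}. -/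
import Mathlib


open Matrix

/-- Projection matrix onto the column space of `A`: `P_A = A (Aᵀ A)⁻¹ Aᵀ`. -/
noncomputable def Pmat {n m : ℕ} (A : Matrix (Fin n) (Fin m) ℝ) : Matrix (Fin n) (Fin n) ℝ :=
  A * (Aᵀ * A)⁻¹ * Aᵀ

/-- Projection matrix onto the span of a single column vector `z`, written with
scalar division: `P_z = z zᵀ / (zᵀ z)`. -/
noncomputable def Pvec {n : ℕ} (z : Matrix (Fin n) (Fin 1) ℝ) : Matrix (Fin n) (Fin n) ℝ :=
  ((zᵀ * z) 0 0)⁻¹ • (z * zᵀ)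

/-- The deviation-from-means matrix `M⁰ = I - (1/n) ι ιᵀ`. -/
noncomputable def M0 (n : ℕ) : Matrix (Fin n) (Fin n) ℝ :=
  (1 : Matrix (Fin n) (Fin n) ℝ) - (n : ℝ)⁻¹ • Matrix.of (fun _ _ => (1 : ℝ))

/-- The augmented matrix `W = [X Z]` obtained by appending the column `Z` to `X`. -/
noncomputable def appendCol {n k : ℕ} (X : Matrix (Fin n) (Fin k) ℝ)
    (Z : Matrix (Fin n) (Fin 1) ℝ) : Matrix (Fin n) (Fin (k + 1)) ℝ :=
  Matrix.of fun i => Fin.snoc (X i) (Z i 0)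

/-- Total R² of a regression of `Y` on regressors with projection matrix `P`:
`R² = (Yᵀ P M⁰ P Y)/(Yᵀ M⁰ Y)`. -/
noncomputable def totalR2 {n : ℕ} (Y : Matrix (Fin n) (Fin 1) ℝ)
    (P : Matrix (Fin n) (Fin n) ℝ) : ℝ :=
  (Yᵀ * P * M0 n * P * Y) 0 0 / (Yᵀ * M0 n * Y) 0 0


lemma Pmat_mul_unit {n m : ℕ} (W : Matrix (Fin n) (Fin m) ℝ)
    (T : Matrix (Fin m) (Fin m) ℝ) (hT : IsUnit T.det) :
    Pmat (W * T) = Pmat W := by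
  unfold Pmat
  have h1 : (W * T)ᵀ * (W * T) = Tᵀ * (Wᵀ * W) * T := by
    rw [transpose_mul]; simp [Matrix.mul_assoc]
  have h2 : (Tᵀ * (Wᵀ * W) * T)⁻¹ = T⁻¹ * ((Wᵀ * W)⁻¹ * Tᵀ⁻¹) := by
    rw [Matrix.mul_inv_rev, Matrix.mul_inv_rev]
  have hTT : T * T⁻¹ = 1 := Matrix.mul_nonsing_inv T hT
  have hTt : (Tᵀ)⁻¹ * Tᵀ = 1 := Matrix.nonsing_inv_mul Tᵀ (by rwa [Matrix.det_transpose])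
  rw [h1, h2, transpose_mul]
  calc W * T * (T⁻¹ * ((Wᵀ * W)⁻¹ * Tᵀ⁻¹)) * (Tᵀ * Wᵀ)
      = W * (T * T⁻¹) * ((Wᵀ * W)⁻¹ * ((Tᵀ)⁻¹ * Tᵀ)) * Wᵀ := by
        simp [Matrix.mul_assoc]
    _ = W * (Wᵀ * W)⁻¹ * Wᵀ := by
        rw [hTT, hTt, Matrix.mul_one, Matrix.mul_one]

/-- residualization as right multiplication by a unit triangular matrix -/
lemma appendCol_resid_factor {n k : ℕ} (X : Matrix (Fin n) (Fin k) ℝ)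
    (Z : Matrix (Fin n) (Fin 1) ℝ) :
    ∃ T : Matrix (Fin (k+1)) (Fin (k+1)) ℝ, IsUnit T.det ∧
      appendCol X Z * T = appendCol X (Z - Pmat X * Z) := by
  set v : Fin (k+1) → ℝ := Fin.snoc (fun j => ((Xᵀ * X)⁻¹ * Xᵀ * Z) j 0) 0 with hv
  set u : Matrix (Fin (k+1)) (Fin (k+1)) ℝ :=
    Matrix.of (fun l j => v l * (if j = Fin.last k then 1 else 0)) with hu
  have huu : u * u = 0 := by
    ext l j
    simp only [Matrix.mul_apply, hu, Matrix.of_apply, Matrix.zero_apply]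
    rw [Finset.sum_eq_zero]
    intro m _
    by_cases hm : m = Fin.last k
    · subst hm
      have : v (Fin.last k) = 0 := Fin.snoc_last _ _
      simp [this]
    · simp [hm]
  refine ⟨1 - u, ?_, ?_⟩
  · have : (1 - u) * (1 + u) = 1 := by
      have : (1 - u) * (1 + u) = 1 - u * u := by noncomm_ring
      rw [this, huu, sub_zero]
    exact Matrix.isUnit_det_of_right_inverse this
  · ext i j
    have hsum : ∑ l, appendCol X Z i l * v l = (Pmat X * Z) i 0 := by
      rw [Fin.sum_univ_castSucc]
      have h1 : appendCol X Z i (Fin.last k) = Z i 0 := by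
        simp [appendCol, Fin.snoc_last]
      have h2 : v (Fin.last k) = 0 := Fin.snoc_last _ _
      rw [h1, h2, mul_zero, add_zero]
      have : ∀ l : Fin k, appendCol X Z i (Fin.castSucc l) * v (Fin.castSucc l)
          = X i l * ((Xᵀ * X)⁻¹ * Xᵀ * Z) l 0 := by
        intro l
        have ha : appendCol X Z i (Fin.castSucc l) = X i l := by
          simp [appendCol, Fin.snoc_castSucc]
        have hb : v (Fin.castSucc l) = ((Xᵀ * X)⁻¹ * Xᵀ * Z) l 0 :=
          Fin.snoc_castSucc _ _ _
        rw [ha, hb]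
      rw [Finset.sum_congr rfl (fun l _ => this l)]
      have : (Pmat X * Z) i 0 = ∑ l, X i l * ((Xᵀ * X)⁻¹ * Xᵀ * Z) l 0 := by
        unfold Pmat
        rw [show X * ((Xᵀ * X)⁻¹) * Xᵀ * Z = X * ((Xᵀ * X)⁻¹ * Xᵀ * Z) by
          simp [Matrix.mul_assoc]]
        rw [Matrix.mul_apply]
      rw [this]
    have hWu : (appendCol X Z * u) i j
        = (if j = Fin.last k then 1 else 0) * (Pmat X * Z) i 0 := by
      rw [Matrix.mul_apply]
      simp only [hu, Matrix.of_apply]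
      rw [show (∑ l, appendCol X Z i l * (v l * (if j = Fin.last k then 1 else 0)))
          = (if j = Fin.last k then 1 else 0) * ∑ l, appendCol X Z i l * v l by
        rw [Finset.mul_sum]; apply Finset.sum_congr rfl; intro l _; ring]
      rw [hsum]
    rw [Matrix.mul_sub, Matrix.mul_one, Matrix.sub_apply, hWu]
    refine Fin.lastCases ?_ ?_ j
    · simp [appendCol, Fin.snoc_last]
    · intro j'
      have hne : (Fin.castSucc j') ≠ Fin.last k := Fin.castSucc_lt_last j' |>.ne
      simp [appendCol, Fin.snoc_castSucc, hne]

/-- The partial R² of `Y` and `Z` given `X` equals the partial R² of `Y` and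
`Z^{⊥X}` given `X`; equivalently `R²_{Y∼X+Z} = R²_{Y∼X+Z^{⊥X}}`. -/
theorem partialR2_resid {n k : ℕ} (X : Matrix (Fin n) (Fin k) ℝ)
    (Z Y : Matrix (Fin n) (Fin 1) ℝ)
    (hX : IsUnit (Xᵀ * X))
    (hiota : ∃ v : Fin k → ℝ, X *ᵥ v = fun _ => (1 : ℝ))
    (hZperp : Z - Pmat X * Z ≠ 0)
    (hY : (Yᵀ * M0 n * Y) 0 0 ≠ 0)
    (hR2 : totalR2 Y (Pmat X) < 1) :
    (totalR2 Y (Pmat (appendCol X Z)) - totalR2 Y (Pmat X)) /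
        (1 - totalR2 Y (Pmat X)) =
      (totalR2 Y (Pmat (appendCol X (Z - Pmat X * Z))) - totalR2 Y (Pmat X)) /
        (1 - totalR2 Y (Pmat X)) ∧
    totalR2 Y (Pmat (appendCol X Z)) =
      totalR2 Y (Pmat (appendCol X (Z - Pmat X * Z))) := by
  obtain ⟨T, hT, hWT⟩ := appendCol_resid_factor X Z
  have hP : Pmat (appendCol X Z) = Pmat (appendCol X (Z - Pmat X * Z)) := by
    rw [← hWT, Pmat_mul_unit _ _ hT]
  rw [hP]
  exact ⟨rfl, rfl⟩
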